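/- arXiv:1912.08805 — 3 statements merged into one kernel-verified Lean document; each statement's English description precedes it below -/
import Mathlib

section
/- Let M be an n×n complex matrix that is diagonalizable, say M = V D V⁻¹ with V invertible and D diagonal, and let z₀ ∈ ℂ, r > 0, and 1 ≤ j ≤ n. If at least j of the diagonal entries of D (counted with multiplicity) lie in the open disk D(z₀, r) = { z : |z − z₀| < r }, then σ_{n−j+1}(z₀·I − M) ≤ r·‖V‖·‖V⁻¹‖. -/
open Matrix

/-- The Euclidean norm of a vector in `ℂⁿ`. -/
noncomputable def vecEnorm {n : ℕ} (v : Fin n → ℂ) : ℝ :=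
  Real.sqrt (∑ i, ‖v i‖ ^ 2)

/-- The spectral norm (`ℓ² → ℓ²` operator norm) of a complex matrix:
the supremum of `‖Av‖` over Euclidean-unit vectors `v`. -/
noncomputable def specNorm {m n : ℕ} (A : Matrix (Fin m) (Fin n) ℂ) : ℝ :=
  sSup {s | ∃ v : Fin n → ℂ, vecEnorm v = 1 ∧ s = vecEnorm (A.mulVec v)}

/-- The `j`-th smallest singular value `σ_{n−j+1}(B)` of an `n×n` complex matrix `B`, via the
Courant–Fischer characterization: the infimum over `j`-dimensional subspaces `S` of `ℂⁿ` of
`max_{x ∈ S, ‖x‖ = 1} ‖Bx‖`. -/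
noncomputable def sval {n : ℕ} (j : ℕ) (B : Matrix (Fin n) (Fin n) ℂ) : ℝ :=
  sInf {t | ∃ S : Submodule ℂ (Fin n → ℂ), Module.finrank ℂ S = j ∧
    t = sSup {s | ∃ v ∈ S, vecEnorm v = 1 ∧ s = vecEnorm (B.mulVec v)}}

lemma vecEnorm_nonneg {n : ℕ} (v : Fin n → ℂ) : 0 ≤ vecEnorm v := Real.sqrt_nonneg _

lemma vecEnorm_eq_norm {n : ℕ} (v : Fin n → ℂ) :
    vecEnorm v = ‖(WithLp.equiv 2 (Fin n → ℂ)).symm v‖ := by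
  rw [EuclideanSpace.norm_eq]
  simp [vecEnorm]

lemma vecEnorm_smul {n : ℕ} (a : ℂ) (v : Fin n → ℂ) :
    vecEnorm (a • v) = ‖a‖ * vecEnorm v := by
  unfold vecEnorm
  rw [← Real.sqrt_sq (norm_nonneg a), ← Real.sqrt_mul (sq_nonneg _), Finset.mul_sum]
  congr 1
  refine Finset.sum_congr rfl fun i _ => ?_
  simp [mul_pow]

noncomputable def mulVecCLM {m n : ℕ} (A : Matrix (Fin m) (Fin n) ℂ) :
    EuclideanSpace ℂ (Fin n) →L[ℂ] EuclideanSpace ℂ (Fin m) :=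
  LinearMap.toContinuousLinearMap
    { toFun := fun x => (WithLp.equiv 2 (Fin m → ℂ)).symm (A.mulVec ((WithLp.equiv 2 (Fin n → ℂ)) x))
      map_add' := by intro x y; ext i; simp [Matrix.mulVec_add]
      map_smul' := by intro c x; ext i; simp [Matrix.mulVec_smul] }

lemma vecEnorm_mulVec_le {m n : ℕ} (A : Matrix (Fin m) (Fin n) ℂ) (v : Fin n → ℂ) :
    vecEnorm (A.mulVec v) ≤ specNorm A * vecEnorm v := by
  set C := ‖mulVecCLM A‖ with hC
  have happ : ∀ u : Fin n → ℂ, vecEnorm (A.mulVec u) ≤ C * vecEnorm u := by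
    intro u
    have := (mulVecCLM A).le_opNorm ((WithLp.equiv 2 (Fin n → ℂ)).symm u)
    simpa [hC, mulVecCLM, vecEnorm_eq_norm] using this
  have hub : ∀ s ∈ {s | ∃ v : Fin n → ℂ, vecEnorm v = 1 ∧ s = vecEnorm (A.mulVec v)}, s ≤ C := by
    rintro s ⟨u, hu, rfl⟩
    simpa [hu] using happ u
  by_cases hv : vecEnorm v = 0
  · have hsum : (∑ i, ‖v i‖ ^ 2) = 0 :=
      le_antisymm (Real.sqrt_eq_zero'.mp hv) (Finset.sum_nonneg fun i _ => sq_nonneg _)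
    have hall := (Finset.sum_eq_zero_iff_of_nonneg (fun i _ => sq_nonneg _)).mp hsum
    have hv0 : v = 0 := by
      funext i
      have := hall i (Finset.mem_univ i)
      have : ‖v i‖ = 0 := by nlinarith [norm_nonneg (v i)]
      simpa using this
    simp [hv0, hv, Matrix.mulVec_zero, vecEnorm]
  · have hvpos : 0 < vecEnorm v := lt_of_le_of_ne (vecEnorm_nonneg v) (Ne.symm hv)
    set c : ℝ := vecEnorm v with hc
    set u : Fin n → ℂ := ((c : ℂ)⁻¹) • v with hu_def
    have hcu : ((c : ℂ)) • u = v := by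
      rw [hu_def, smul_smul, mul_inv_cancel₀ (by exact_mod_cast hvpos.ne'), one_smul]
    have hu1 : vecEnorm u = 1 := by
      rw [hu_def, vecEnorm_smul]
      simp [norm_inv, Complex.norm_real, Real.norm_eq_abs, abs_of_pos hvpos, ← hc,
        inv_mul_cancel₀ hvpos.ne']
    have hle : vecEnorm (A.mulVec u) ≤ specNorm A :=
      le_csSup ⟨C, hub⟩ ⟨u, hu1, rfl⟩
    calc vecEnorm (A.mulVec v) = vecEnorm ((c : ℂ) • A.mulVec u) := by
          rw [← Matrix.mulVec_smul, hcu]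
      _ = c * vecEnorm (A.mulVec u) := by
          rw [vecEnorm_smul, Complex.norm_of_nonneg hvpos.le]
      _ ≤ c * specNorm A := by
          exact mul_le_mul_of_nonneg_left hle hvpos.le
      _ = specNorm A * vecEnorm v := by rw [mul_comm, hc]

lemma specNorm_nonneg {m n : ℕ} (A : Matrix (Fin m) (Fin n) ℂ) : 0 ≤ specNorm A :=
  Real.sSup_nonneg (by rintro s ⟨v, hv, rfl⟩; exact vecEnorm_nonneg _)

/-- Submodule of vectors supported on a finset. -/
noncomputable def suppSub {n : ℕ} (T : Finset (Fin n)) : Submodule ℂ (Fin n → ℂ) where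
  carrier := {w | ∀ i ∉ T, w i = 0}
  add_mem' := by intro a b ha hb i hi; simp [Pi.add_apply, ha i hi, hb i hi]
  zero_mem' := by intro i _; rfl
  smul_mem' := by intro c a ha i hi; simp [Pi.smul_apply, ha i hi]

lemma vecEnorm_diag_le {n : ℕ} (e : Fin n → ℂ) (w : Fin n → ℂ) (r : ℝ) (hr : 0 ≤ r)
    (h : ∀ i, ‖e i‖ * ‖w i‖ ≤ r * ‖w i‖) :
    vecEnorm ((Matrix.diagonal e).mulVec w) ≤ r * vecEnorm w := by
  unfold vecEnorm
  rw [← Real.sqrt_sq hr, ← Real.sqrt_mul (sq_nonneg _), Finset.mul_sum]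
  apply Real.sqrt_le_sqrt
  apply Finset.sum_le_sum
  intro i _
  have heq : ‖(Matrix.diagonal e).mulVec w i‖ = ‖e i‖ * ‖w i‖ := by
    rw [Matrix.mulVec_diagonal, norm_mul]
  have h0 : 0 ≤ ‖e i‖ * ‖w i‖ :=
    mul_nonneg (norm_nonneg _) (norm_nonneg _)
  rw [heq]
  calc (‖e i‖ * ‖w i‖) ^ 2
      ≤ (r * ‖w i‖) ^ 2 := pow_le_pow_left₀ h0 (h i) 2
    _ = r ^ 2 * ‖w i‖ ^ 2 := by ring

/-- If `M = V D V⁻¹` is diagonalizable and at least `j` of the diagonal entries of `D`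
(counted with multiplicity) lie in the open disk `D(z₀, r)`, then
`σ_{n−j+1}(z₀ I − M) ≤ r ‖V‖ ‖V⁻¹‖`. -/
theorem sval_le_of_eigenvalues_in_disk {n : ℕ} (M V : Matrix (Fin n) (Fin n) ℂ)
    (d : Fin n → ℂ) (hV : IsUnit V) (hM : M = V * Matrix.diagonal d * V⁻¹)
    (z₀ : ℂ) (r : ℝ) (hr : 0 < r) (j : ℕ) (hj : 1 ≤ j) (hjn : j ≤ n)
    (hcount : j ≤ (Finset.univ.filter fun i => ‖d i - z₀‖ < r).card) :
    sval j (z₀ • (1 : Matrix (Fin n) (Fin n) ℂ) - M) ≤ r * (specNorm V * specNorm V⁻¹) := by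
  have hdet : IsUnit V.det := (Matrix.isUnit_iff_isUnit_det V).mp hV
  have hVV : V⁻¹ * V = 1 := Matrix.nonsing_inv_mul V hdet
  have hVV' : V * V⁻¹ = 1 := Matrix.mul_nonsing_inv V hdet
  -- choose T' of card j
  obtain ⟨T', hT'sub, hT'card⟩ := Finset.exists_subset_card_eq hcount
  -- the family of coordinate vectors
  set g : {i // i ∈ T'} → (Fin n → ℂ) := fun i => Pi.single i.1 1 with hg
  have hg_li : LinearIndependent ℂ g := by
    have hb := (Pi.basisFun ℂ (Fin n)).linearIndependent
    have := hb.comp (fun i : {i // i ∈ T'} => i.1) Subtype.val_injective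
    convert this using 1
    funext i
    simp [hg, Pi.basisFun_apply]
  set W : Submodule ℂ (Fin n → ℂ) := Submodule.span ℂ (Set.range g) with hW
  have hWrank : Module.finrank ℂ W = j := by
    rw [hW, finrank_span_eq_card hg_li, Fintype.card_coe, hT'card]
  have hWsupp : W ≤ suppSub T' := by
    rw [hW, Submodule.span_le]
    rintro _ ⟨i, rfl⟩
    intro k hk
    have : k ≠ i.1 := fun h => hk (h ▸ i.2)
    simp [hg, Pi.single_apply, this]
  -- injectivity of mulVec V
  have hinj : Function.Injective (Matrix.mulVecLin V) := by
    intro a b hab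
    have : V⁻¹.mulVec (V.mulVec a) = V⁻¹.mulVec (V.mulVec b) := by
      simpa [Matrix.mulVecLin_apply] using congrArg (V⁻¹.mulVec ·) hab
    simpa [Matrix.mulVec_mulVec, hVV] using this
  set S : Submodule ℂ (Fin n → ℂ) := Submodule.map (Matrix.mulVecLin V) W with hS
  have hSrank : Module.finrank ℂ S = j := by
    rw [hS, ← hWrank]
    exact (Submodule.equivMapOfInjective _ hinj W).finrank_eq.symm
  -- bound on the sup over S
  set B : Matrix (Fin n) (Fin n) ℂ := z₀ • (1 : Matrix (Fin n) (Fin n) ℂ) - M with hB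
  have hBform : B * V = V * Matrix.diagonal (fun i => z₀ - d i) := by
    rw [hB, hM]
    rw [Matrix.sub_mul]
    rw [mul_assoc (V * Matrix.diagonal d) V⁻¹ V, hVV, mul_one]
    have h1 : (z₀ • (1 : Matrix (Fin n) (Fin n) ℂ)) * V = V * (z₀ • 1) := by
      rw [Matrix.smul_mul, one_mul, Matrix.mul_smul, mul_one]
    rw [h1, ← Matrix.mul_sub]
    congr 1
    ext i k
    by_cases h : i = k <;>
      simp [Matrix.sub_apply, Matrix.smul_apply, Matrix.one_apply, Matrix.diagonal_apply, h]
  have key : ∀ s ∈ {s | ∃ v ∈ S, vecEnorm v = 1 ∧ s = vecEnorm (B.mulVec v)},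
      s ≤ r * (specNorm V * specNorm V⁻¹) := by
    rintro s ⟨v, hvS, hv1, rfl⟩
    obtain ⟨w, hwW, hwv⟩ := hvS
    rw [Matrix.mulVecLin_apply] at hwv
    have hwsupp : ∀ i ∉ T', w i = 0 := hWsupp hwW
    -- B v = V (diag (z₀ - d)) w
    have h1 : B.mulVec v = V.mulVec ((Matrix.diagonal (fun i => z₀ - d i)).mulVec w) := by
      rw [← hwv, Matrix.mulVec_mulVec, hBform, ← Matrix.mulVec_mulVec]
    -- bound for w
    have hwnorm : vecEnorm w ≤ specNorm V⁻¹ := by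
      have : w = V⁻¹.mulVec v := by
        rw [← hwv, Matrix.mulVec_mulVec, hVV, Matrix.one_mulVec]
      rw [this]
      calc vecEnorm (V⁻¹.mulVec v) ≤ specNorm V⁻¹ * vecEnorm v := vecEnorm_mulVec_le _ _
        _ = specNorm V⁻¹ := by rw [hv1, mul_one]
    have hdiag : vecEnorm ((Matrix.diagonal (fun i => z₀ - d i)).mulVec w) ≤ r * vecEnorm w := by
      apply vecEnorm_diag_le _ _ _ hr.le
      intro i
      by_cases hi : i ∈ T'
      · have : ‖d i - z₀‖ < r := by
          have := hT'sub hi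
          simpa using this
        have habs : ‖z₀ - d i‖ ≤ r := by
          rw [norm_sub_rev]
          exact this.le
        exact mul_le_mul_of_nonneg_right habs (norm_nonneg _)
      · simp [hwsupp i hi]
    calc vecEnorm (B.mulVec v)
        = vecEnorm (V.mulVec ((Matrix.diagonal (fun i => z₀ - d i)).mulVec w)) := by rw [h1]
      _ ≤ specNorm V * vecEnorm ((Matrix.diagonal (fun i => z₀ - d i)).mulVec w) :=
          vecEnorm_mulVec_le _ _
      _ ≤ specNorm V * (r * vecEnorm w) := by
          exact mul_le_mul_of_nonneg_left hdiag (specNorm_nonneg V)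
      _ ≤ specNorm V * (r * specNorm V⁻¹) := by
          apply mul_le_mul_of_nonneg_left _ (specNorm_nonneg V)
          exact mul_le_mul_of_nonneg_left hwnorm hr.le
      _ = r * (specNorm V * specNorm V⁻¹) := by ring
  have hrhs : 0 ≤ r * (specNorm V * specNorm V⁻¹) :=
    mul_nonneg hr.le (mul_nonneg (specNorm_nonneg V) (specNorm_nonneg V⁻¹))
  have hmem : sSup {s | ∃ v ∈ S, vecEnorm v = 1 ∧ s = vecEnorm (B.mulVec v)} ∈
      {t | ∃ S' : Submodule ℂ (Fin n → ℂ), Module.finrank ℂ S' = j ∧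
        t = sSup {s | ∃ v ∈ S', vecEnorm v = 1 ∧ s = vecEnorm (B.mulVec v)}} :=
    ⟨S, hSrank, rfl⟩
  have hbdd : BddBelow {t | ∃ S' : Submodule ℂ (Fin n → ℂ), Module.finrank ℂ S' = j ∧
      t = sSup {s | ∃ v ∈ S', vecEnorm v = 1 ∧ s = vecEnorm (B.mulVec v)}} := by
    refine ⟨0, ?_⟩
    rintro t ⟨S', _, rfl⟩
    exact Real.sSup_nonneg (by rintro s ⟨v, _, _, rfl⟩; exact vecEnorm_nonneg _)
  calc sval j B ≤ sSup {s | ∃ v ∈ S, vecEnorm v = 1 ∧ s = vecEnorm (B.mulVec v)} :=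
        csInf_le hbdd hmem
    _ ≤ r * (specNorm V * specNorm V⁻¹) := Real.sSup_le key hrhs
end

section
/- (Separation of Apollonian circles.) Let α, β ∈ (0,1) and let x, y ∈ ℂ be points whose Möbius ratio m(z) = (1−z)/(1+z) satisfies |m(x)| ∈ {α, 1/α} and |m(y)| ∈ {β, 1/β} (that is, x lies on the boundary of C^±_α and y on the boundary of C^±_β). Then |x − y| ≥ |α − β|/2. -/
/-- The Möbius transformation `m(z) = (1 - z)/(1 + z)`. -/
noncomputable def mobius (z : ℂ) : ℂ := (1 - z) / (1 + z)

lemma mobius_ne_case {α : ℝ} (hα0 : 0 < α) {x : ℂ}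
    (hx : ‖mobius x‖ = α) : (1 : ℂ) + x ≠ 0 := by
  intro h
  rw [mobius, h, div_zero] at hx
  simp at hx
  linarith [hx ▸ hα0]

lemma abs_eq_of_mobius {α : ℝ} (hα0 : 0 < α) {x : ℂ}
    (hx : ‖mobius x‖ = α) :
    ‖1 - x‖ = α * ‖1 + x‖ := by
  have h1 : (1 : ℂ) + x ≠ 0 := mobius_ne_case hα0 hx
  rw [mobius, norm_div] at hx
  have h2 : ‖1 + x‖ ≠ 0 := by simpa using h1
  field_simp at hx
  linarith [hx]

lemma re_lb {α : ℝ} (hα0 : 0 < α) (hα1 : α < 1) {x : ℂ}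
    (hx : ‖mobius x‖ = α) : (1 - α)/(1 + α) ≤ x.re := by
  have habs := abs_eq_of_mobius hα0 hx
  have h2 : (1 - x.re)^2 + x.im^2 = α^2 * ((1 + x.re)^2 + x.im^2) := by
    have := congrArg (· ^ 2) habs
    simp only [mul_pow, Complex.sq_norm, Complex.normSq_apply] at this
    simp only [Complex.sub_re, Complex.sub_im, Complex.add_re, Complex.add_im,
      Complex.one_re, Complex.one_im] at this
    ring_nf at this ⊢
    linarith [this]
  have key : ((1 + α) * x.re - (1 - α)) * ((1 - α) * x.re - (1 + α))
      = -((1 - α ^ 2) * x.im ^ 2) := by linear_combination h2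
  have ha2 : (0:ℝ) < 1 - α ^ 2 := by nlinarith
  rw [div_le_iff₀ (by linarith : (0:ℝ) < 1 + α)]
  by_contra hcon
  push_neg at hcon
  have hP : (1 + α) * x.re - (1 - α) < 0 := by linarith [hcon]
  have hQ : (1 - α) * x.re - (1 + α) < 0 := by nlinarith [hP, sq_nonneg x.re]
  have hPQ : 0 < ((1 + α) * x.re - (1 - α)) * ((1 - α) * x.re - (1 + α)) :=
    mul_pos_of_neg_of_neg hP hQ
  nlinarith [mul_nonneg ha2.le (sq_nonneg x.im)]

lemma one_le_abs_one_add {α : ℝ} (hα0 : 0 < α) (hα1 : α < 1) {x : ℂ}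
    (hx : ‖mobius x‖ = α) : 1 ≤ ‖1 + x‖ := by
  have hre : (0:ℝ) ≤ x.re := by
    have := re_lb hα0 hα1 hx
    have h1 : (0:ℝ) ≤ (1 - α)/(1 + α) := div_nonneg (by linarith) (by linarith)
    linarith
  have h2 : (1:ℝ) ≤ ‖1 + x‖ ^ 2 := by
    rw [Complex.sq_norm, Complex.normSq_apply]
    simp only [Complex.add_re, Complex.add_im, Complex.one_re, Complex.one_im]
    nlinarith [sq_nonneg x.im, sq_nonneg x.re]
  nlinarith [norm_nonneg (1 + x)]

lemma mobius_neg {β : ℝ} (hβ0 : 0 < β) {y : ℂ}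
    (hy : ‖mobius y‖ = 1 / β) :
    ‖mobius (-y)‖ = β := by
  have h1 : (1 : ℂ) - y ≠ 0 := by
    intro h
    rw [mobius, h, zero_div] at hy
    simp at hy
    rw [← hy] at hβ0
    simp at hβ0
  have h2 : (1 : ℂ) + y ≠ 0 := mobius_ne_case (by positivity) hy
  have h3 : mobius (-y) = (mobius y)⁻¹ := by
    rw [mobius, mobius]
    rw [inv_div]
    ring_nf
  rw [h3, norm_inv, hy]
  rw [one_div, inv_inv]

/-- same-side case -/
lemma case_same (α β : ℝ) (hα : α ∈ Set.Ioo (0 : ℝ) 1)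
    (hβ : β ∈ Set.Ioo (0 : ℝ) 1) (x y : ℂ)
    (hx : ‖mobius x‖ = α) (hy : ‖mobius y‖ = β) :
    |α - β| / 2 ≤ ‖x - y‖ := by
  obtain ⟨hα0, hα1⟩ := hα
  obtain ⟨hβ0, hβ1⟩ := hβ
  have hx1 : (1 : ℂ) + x ≠ 0 := mobius_ne_case hα0 hx
  have hy1 : (1 : ℂ) + y ≠ 0 := mobius_ne_case hβ0 hy
  have hmx : 1 ≤ ‖1 + x‖ := one_le_abs_one_add hα0 hα1 hx
  have hmy : 1 ≤ ‖1 + y‖ := one_le_abs_one_add hβ0 hβ1 hy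
  have hdiff : mobius x - mobius y = 2 * (y - x) / ((1 + x) * (1 + y)) := by
    rw [mobius, mobius]
    field_simp
    ring
  have habs : ‖mobius x - mobius y‖
      = 2 * ‖x - y‖ / (‖1 + x‖ * ‖1 + y‖) := by
    rw [hdiff, norm_div, norm_mul, norm_mul, norm_sub_rev, Complex.norm_two]
  have h1 : |α - β| ≤ ‖mobius x - mobius y‖ := by
    rw [← hx, ← hy]
    exact abs_norm_sub_norm_le _ _
  have h2 : ‖mobius x - mobius y‖ ≤ 2 * ‖x - y‖ := by
    rw [habs]
    rw [div_le_iff₀ (by positivity)]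
    have habsxy : (0:ℝ) ≤ ‖x - y‖ := norm_nonneg _
    have hp : (1:ℝ) ≤ ‖1 + x‖ * ‖1 + y‖ := by nlinarith
    nlinarith [mul_nonneg habsxy (by linarith : (0:ℝ) ≤ ‖1 + x‖ * ‖1 + y‖ - 1)]
  linarith

/-- cross case: `x` on right circle, `y` on left circle -/
lemma case_cross (α β : ℝ) (hα : α ∈ Set.Ioo (0 : ℝ) 1)
    (hβ : β ∈ Set.Ioo (0 : ℝ) 1) (x y : ℂ)
    (hx : ‖mobius x‖ = α) (hy : ‖mobius y‖ = 1 / β) :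
    |α - β| / 2 ≤ ‖x - y‖ := by
  obtain ⟨hα0, hα1⟩ := hα
  obtain ⟨hβ0, hβ1⟩ := hβ
  have hxre : (1 - α)/(1 + α) ≤ x.re := re_lb hα0 hα1 hx
  have hyre : (1 - β)/(1 + β) ≤ (-y).re := re_lb hβ0 hβ1 (mobius_neg hβ0 hy)
  have h1 : (1 - α)/2 ≤ (1 - α)/(1 + α) := by
    rw [div_le_div_iff₀ (by norm_num) (by linarith)]
    nlinarith
  have h2 : (1 - β)/2 ≤ (1 - β)/(1 + β) := by
    rw [div_le_div_iff₀ (by norm_num) (by linarith)]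
    nlinarith
  have h3 : (x - y).re ≤ |(x - y).re| := le_abs_self _
  have h4 : |(x - y).re| ≤ ‖x - y‖ := Complex.abs_re_le_norm _
  have h5 : (x - y).re = x.re + (-y).re := by simp [Complex.sub_re, Complex.neg_re]; ring
  rcases abs_cases (α - β) with ⟨heq, _⟩ | ⟨heq, _⟩ <;> rw [heq] <;> nlinarith

/-- (Separation of Apollonian circles.)  If `x` lies on the boundary of `C^±_α`
(i.e. `|m(x)| = α` or `|m(x)| = 1/α`) and `y` lies on the boundary of `C^±_β`
(i.e. `|m(y)| = β` or `|m(y)| = 1/β`), with `α, β ∈ (0,1)`, then `|x − y| ≥ |α − β|/2`. -/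
theorem apollonius_separation (α β : ℝ) (hα : α ∈ Set.Ioo (0 : ℝ) 1)
    (hβ : β ∈ Set.Ioo (0 : ℝ) 1) (x y : ℂ)
    (hx : ‖mobius x‖ = α ∨ ‖mobius x‖ = 1 / α)
    (hy : ‖mobius y‖ = β ∨ ‖mobius y‖ = 1 / β) :
    |α - β| / 2 ≤ ‖x - y‖ := by
  have hsym : ‖-x - -y‖ = ‖x - y‖ := by
    rw [show -x - -y = -(x - y) by ring]
    exact norm_neg _
  rcases hx with hx | hx <;> rcases hy with hy | hy
  · exact case_same α β hα hβ x y hx hy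
  · exact case_cross α β hα hβ x y hx hy
  · have := case_cross β α hβ hα y x hy hx
    rwa [abs_sub_comm β α, norm_sub_rev y x] at this
  · have := case_same α β hα hβ (-x) (-y) (mobius_neg hα.1 hx) (mobius_neg hβ.1 hy)
    rwa [hsym] at this
end

section
/- Let t and c be real numbers with 0 < t < 1/800 and 0 < c < 1/2. Then for every natural number j with j ≥ lg(1/t) + 2·lg lg(1/t) + lg lg(1/c) + 1.62, one has (1−t)^{2^j} / t^{2j} < c. -/
set_option maxHeartbeats 1000000 in
/-- Let `0 < t < 1/800` and `0 < c < 1/2`.  Then for every natural number `j` with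
`j ≥ lg(1/t) + 2·lg lg(1/t) + lg lg(1/c) + 1.62` (where `lg` is the base-2 logarithm),
one has `(1−t)^{2^j} / t^{2j} < c`. -/
theorem newton_iteration_count (t c : ℝ) (ht : 0 < t) (ht' : t < 1 / 800)
    (hc : 0 < c) (hc' : c < 1 / 2) (j : ℕ)
    (hj : Real.logb 2 (1 / t) + 2 * Real.logb 2 (Real.logb 2 (1 / t)) +
        Real.logb 2 (Real.logb 2 (1 / c)) + 1.62 ≤ (j : ℝ)) :
    (1 - t) ^ (2 ^ j) / t ^ (2 * j) < c := by
  have h2 : (1:ℝ) < 2 := one_lt_two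
  obtain ⟨L, hLdef⟩ : ∃ x : ℝ, x = Real.logb 2 (1 / t) := ⟨_, rfl⟩
  obtain ⟨M, hMdef⟩ : ∃ x : ℝ, x = Real.logb 2 (1 / c) := ⟨_, rfl⟩
  rw [← hLdef, ← hMdef] at hj
  have hti : (800:ℝ) < 1 / t := by
    rw [lt_div_iff₀ ht]; nlinarith
  have hci : (2:ℝ) < 1 / c := by
    rw [lt_div_iff₀ hc]; nlinarith
  have hL9 : (9:ℝ) < L := by
    rw [hLdef, Real.lt_logb_iff_rpow_lt h2 (by positivity)]
    have h512 : (2:ℝ) ^ (9:ℝ) = 512 := by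
      rw [show (9:ℝ) = ((9:ℕ):ℝ) by norm_num, Real.rpow_natCast]; norm_num
    rw [h512]; linarith
  have hM1 : (1:ℝ) < M := by
    rw [hMdef, Real.lt_logb_iff_rpow_lt h2 (by positivity)]
    rw [Real.rpow_one]; linarith
  have hL0 : (0:ℝ) < L := by linarith
  have hM0 : (0:ℝ) < M := by linarith
  have hlog2pos : 0 < Real.log 2 := Real.log_pos h2
  have hln2lo : (0.6931:ℝ) < Real.log 2 := by linarith [Real.log_two_gt_d9]
  have hln2hi : Real.log 2 < 0.6932 := by linarith [Real.log_two_lt_d9]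
  have hlogt : Real.log t = -(L * Real.log 2) := by
    have h1 : L * Real.log 2 = Real.log (1 / t) := by
      rw [hLdef, Real.logb]; field_simp
    rw [one_div, Real.log_inv] at h1; linarith
  have hlogc : Real.log c = -(M * Real.log 2) := by
    have h1 : M * Real.log 2 = Real.log (1 / c) := by
      rw [hMdef, Real.logb]; field_simp
    rw [one_div, Real.log_inv] at h1; linarith
  -- bounds on the iterated logs
  have hlgL0 : 0 ≤ Real.logb 2 L := Real.logb_nonneg h2 (by linarith)
  have hlgM0 : 0 ≤ Real.logb 2 M := Real.logb_nonneg h2 (by linarith)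
  have hlogL : Real.log L ≤ L / 8 + 1.08 := by
    have h8 : Real.log L = Real.log 8 + Real.log (L / 8) := by
      rw [← Real.log_mul (by norm_num) (by positivity)]
      congr 1; ring
    have hsub := Real.log_le_sub_one_of_pos (show (0:ℝ) < L / 8 by linarith)
    have h83 : Real.log 8 = 3 * Real.log 2 := by
      rw [show (8:ℝ) = 2 ^ (3:ℕ) by norm_num, Real.log_pow]; push_cast; ring
    linarith
  have hlgL : Real.logb 2 L ≤ 0.181 * L + 1.56 := by
    rw [Real.logb, div_le_iff₀ hlog2pos]
    nlinarith
  have hlgM : Real.logb 2 M ≤ 1.443 * M - 1.443 := by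
    have hsub := Real.log_le_sub_one_of_pos hM0
    rw [Real.logb, div_le_iff₀ hlog2pos]
    nlinarith
  have hj0pos : (0:ℝ) ≤ L + 2 * Real.logb 2 L + Real.logb 2 M + 1.62 := by nlinarith
  -- base case, for any n between the bound and the bound + 1
  have base : ∀ n : ℕ, L + 2 * Real.logb 2 L + Real.logb 2 M + 1.62 ≤ (n:ℝ) →
      (n:ℝ) < L + 2 * Real.logb 2 L + Real.logb 2 M + 2.62 →
      (1 - t) ^ (2 ^ n) / t ^ (2 * n) < c := by
    intro n hn1 hn2
    have h2L : (2:ℝ) ^ L = 1 / t := by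
      rw [hLdef]; exact Real.rpow_logb two_pos (by norm_num) (by positivity)
    have e1 : t * (2:ℝ) ^ (n:ℕ) = (2:ℝ) ^ ((n:ℝ) - L) := by
      rw [Real.rpow_sub two_pos, h2L, Real.rpow_natCast]
      field_simp
    have e2 : (2:ℝ) ^ (2 * Real.logb 2 L + Real.logb 2 M + 1.62) ≤ (2:ℝ) ^ ((n:ℝ) - L) :=
      (Real.rpow_le_rpow_left_iff h2).mpr (by linarith)
    have e3 : (2:ℝ) ^ (2 * Real.logb 2 L + Real.logb 2 M + 1.62)
        = L * L * M * (2:ℝ) ^ (1.62:ℝ) := by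
      rw [show 2 * Real.logb 2 L + Real.logb 2 M + 1.62
          = Real.logb 2 L + (Real.logb 2 L + (Real.logb 2 M + 1.62)) by ring,
        Real.rpow_add two_pos, Real.rpow_add two_pos, Real.rpow_add two_pos,
        Real.rpow_logb two_pos (by norm_num) hL0,
        Real.rpow_logb two_pos (by norm_num) hM0]
      ring
    have e4 : (3:ℝ) ≤ (2:ℝ) ^ (1.62:ℝ) := by
      have h16 : (2:ℝ) ^ ((8:ℝ)/5) ≤ (2:ℝ) ^ (1.62:ℝ) :=
        (Real.rpow_le_rpow_left_iff h2).mpr (by norm_num)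
      have hA : (2:ℝ) ^ ((8:ℝ)/5) = ((256:ℝ)) ^ ((5:ℕ):ℝ)⁻¹ := by
        rw [show (8:ℝ)/5 = ((8:ℕ):ℝ) * ((5:ℕ):ℝ)⁻¹ by norm_num,
          Real.rpow_mul (by norm_num), Real.rpow_natCast]
        norm_num
      have hB : (3:ℝ) = ((243:ℝ)) ^ ((5:ℕ):ℝ)⁻¹ := by
        rw [show (243:ℝ) = 3 ^ (5:ℕ) by norm_num,
          Real.pow_rpow_inv_natCast (by norm_num) (by norm_num)]
      have hC : ((243:ℝ)) ^ ((5:ℕ):ℝ)⁻¹ ≤ ((256:ℝ)) ^ ((5:ℕ):ℝ)⁻¹ :=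
        Real.rpow_le_rpow (by norm_num) (by norm_num) (by positivity)
      rw [hB]; rw [hA] at h16; linarith
    have hpow : 3 * (L * L * M) ≤ t * (2:ℝ) ^ (n:ℕ) := by
      rw [e1]
      have hLLM : (0:ℝ) ≤ L * L * M := by positivity
      calc 3 * (L * L * M) ≤ L * L * M * (2:ℝ) ^ (1.62:ℝ) := by
            linarith [mul_le_mul_of_nonneg_left e4 hLLM]
        _ = (2:ℝ) ^ (2 * Real.logb 2 L + Real.logb 2 M + 1.62) := e3.symm
        _ ≤ (2:ℝ) ^ ((n:ℝ) - L) := e2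
    -- numeric core
    have hnb : (n:ℝ) < 1.362 * L + 1.443 * M + 4.297 := by linarith
    have hnpos : (0:ℝ) ≤ (n:ℝ) := Nat.cast_nonneg _
    have hcore : M * Real.log 2 + 2 * (n:ℝ) * L * Real.log 2 < 3 * (L * L * M) := by
      clear e1 e2 e3 e4 h2L hpow hj hn1 hn2 hlogt hlogc hti hci
      have hpos1 : (0:ℝ) < 2 * L * Real.log 2 := by positivity
      have hstep1 : 2 * L * Real.log 2 * (n:ℝ)
          < 2 * L * Real.log 2 * (1.362 * L + 1.443 * M + 4.297) :=
        mul_lt_mul_of_pos_left hnb hpos1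
      have hpos2 : (0:ℝ) ≤ 2 * (1.362 * L + 1.443 * M + 4.297) * L := by
        have : (0:ℝ) < 1.362 * L + 1.443 * M + 4.297 := by linarith
        positivity
      have hstep2 : 2 * (1.362 * L + 1.443 * M + 4.297) * L * Real.log 2
          ≤ 2 * (1.362 * L + 1.443 * M + 4.297) * L * 0.6932 :=
        mul_le_mul_of_nonneg_left hln2hi.le hpos2
      have hstep3 : M * Real.log 2 ≤ M * 0.6932 :=
        mul_le_mul_of_nonneg_left hln2hi.le hM0.le
      have hfinal : M * 0.6932 + 2 * (1.362 * L + 1.443 * M + 4.297) * L * 0.6932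
          < 3 * (L * L * M) := by
        nlinarith [mul_nonneg (sub_nonneg.2 hM1.le) (sq_nonneg (L - 9)),
          mul_nonneg (sub_nonneg.2 hM1.le) (sub_nonneg.2 hL9.le),
          sub_nonneg.2 hM1.le, sq_nonneg (L - 9), sub_nonneg.2 hL9.le]
      nlinarith [hstep1, hstep2, hstep3, hfinal]
    have hmain : -(t * (2:ℝ) ^ (n:ℕ)) <
        Real.log c + ((2 * n : ℕ):ℝ) * Real.log t := by
      rw [hlogc, hlogt]; push_cast
      nlinarith [hpow, hcore]
    have hfin : (1 - t) ^ (2 ^ n) < c * t ^ (2 * n) := by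
      calc (1 - t) ^ (2 ^ n) ≤ (Real.exp (-t)) ^ (2 ^ n) := by
            apply pow_le_pow_left₀ (by linarith)
            linarith [Real.add_one_le_exp (-t)]
        _ = Real.exp (-(t * (2:ℝ) ^ (n:ℕ))) := by
            rw [← Real.exp_nat_mul]; push_cast; ring_nf
        _ < Real.exp (Real.log c + ((2 * n : ℕ):ℝ) * Real.log t) := Real.exp_lt_exp.mpr hmain
        _ = c * t ^ (2 * n) := by
            rw [Real.exp_add, Real.exp_log hc, ← Real.log_pow, Real.exp_log (pow_pos ht _)]
    rw [div_lt_iff₀ (by positivity)]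
    exact hfin
  -- induction step
  have step : ∀ k : ℕ, 1 ≤ k → (1 - t) ^ (2 ^ k) / t ^ (2 * k) < c →
      (1 - t) ^ (2 ^ (k + 1)) / t ^ (2 * (k + 1)) < c := by
    intro k hk1 IH
    obtain ⟨m, rfl⟩ : ∃ m, k = m + 1 := ⟨k - 1, by omega⟩
    have hIH : (1 - t) ^ (2 ^ (m+1)) < c * t ^ (2 * (m+1)) :=
      (div_lt_iff₀ (by positivity)).mp IH
    have hA0 : 0 ≤ (1 - t) ^ (2 ^ (m+1)) := pow_nonneg (by linarith) _
    have hsq : ((1 - t) ^ (2 ^ (m+1))) ^ 2 < (c * t ^ (2 * (m+1))) ^ 2 :=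
      pow_lt_pow_left₀ hIH hA0 (by norm_num)
    have h1 : (1 - t) ^ (2 ^ (m+1+1)) = ((1 - t) ^ (2 ^ (m+1))) ^ 2 := by
      rw [← pow_mul, pow_succ]
    have hct1 : c * t ^ (2 * m) ≤ 1 := by
      have htle : t ^ (2 * m) ≤ 1 := pow_le_one₀ ht.le (by linarith)
      nlinarith [pow_nonneg ht.le (2 * m)]
    have h2' : (c * t ^ (2 * (m+1))) ^ 2 ≤ c * t ^ (2 * (m+1+1)) := by
      have hexp : (c * t ^ (2 * (m+1))) ^ 2
          = (c * t ^ (2 * m)) * (c * t ^ (2 * (m+1+1))) := by ring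
      rw [hexp]
      have hpos : 0 ≤ c * t ^ (2 * (m+1+1)) := by positivity
      nlinarith
    rw [div_lt_iff₀ (by positivity), h1]
    exact lt_of_lt_of_le hsq h2'
  -- put it together
  obtain ⟨n₀, hn₀l, hn₀u, hn₀j⟩ :
      ∃ n₀ : ℕ, L + 2 * Real.logb 2 L + Real.logb 2 M + 1.62 ≤ (n₀:ℝ) ∧
        (n₀:ℝ) < L + 2 * Real.logb 2 L + Real.logb 2 M + 2.62 ∧ n₀ ≤ j := by
    refine ⟨⌈L + 2 * Real.logb 2 L + Real.logb 2 M + 1.62⌉₊, Nat.le_ceil _, ?_, ?_⟩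
    · have := Nat.ceil_lt_add_one hj0pos
      linarith
    · exact Nat.ceil_le.mpr hj
  have hn₀1 : 1 ≤ n₀ := by
    have : (1:ℝ) ≤ (n₀:ℝ) := by linarith
    exact_mod_cast this
  have key : ∀ n : ℕ, n₀ ≤ n → (1 - t) ^ (2 ^ n) / t ^ (2 * n) < c := by
    intro n hn
    induction n, hn using Nat.le_induction with
    | base => exact base n₀ hn₀l hn₀u
    | succ k hk IH => exact step k (le_trans hn₀1 hk) IH
  exact key j hn₀j
end
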